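/- Let d be even, Δ ≥ 2. There exist right-hand sides b, b' ∈ ℤ^d_{≥0} with ‖b − b'‖₁ = 1 and a nonnegative integer matrix A ∈ ℤ^{d×d}_{≥0} with ‖A‖_∞ = Δ such that the systems Ax = b and Ax' = b' each have a unique nonnegative integer solution, and these solutions satisfy ‖x − x'‖₁ ≥ Δ^{d-1}. -/

import Mathlib

/-- Sensitivity lower bound: for even `d` and `Δ ≥ 2` there are a nonnegative
matrix `A` with largest entry `Δ` and right-hand sides `b, b'` at `ℓ₁`-distance
`1` whose unique nonnegative integer solutions differ by at least `Δ^{d-1}` in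
the `ℓ₁`-norm. -/
theorem stmt3 (d : ℕ) (hd : Even d) (hd0 : 0 < d) (Δ : ℤ) (hΔ : 2 ≤ Δ) :
    ∃ (A : Matrix (Fin d) (Fin d) ℤ) (b b' : Fin d → ℤ),
      (∀ i j, 0 ≤ A i j) ∧ (∀ i j, A i j ≤ Δ) ∧ (∃ i j, A i j = Δ) ∧
      (∀ i, 0 ≤ b i) ∧ (∀ i, 0 ≤ b' i) ∧ (∑ i, |b i - b' i| = 1) ∧
      ∃ (x x' : Fin d → ℤ),
        {y : Fin d → ℤ | (∀ i, 0 ≤ y i) ∧ A.mulVec y = b} = {x} ∧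
        {y : Fin d → ℤ | (∀ i, 0 ≤ y i) ∧ A.mulVec y = b'} = {x'} ∧
        Δ ^ (d - 1) ≤ ∑ i, |x i - x' i| := by
  classical
  have hΔ0 : (0:ℤ) ≤ Δ := by linarith
  have hd2 : 2 ≤ d := by rcases hd with ⟨k, hk⟩; omega
  set A : Matrix (Fin d) (Fin d) ℤ :=
    fun i j => (if (i:ℕ) = (j:ℕ) then 1 else 0) + (if (i:ℕ) = (j:ℕ)+1 then Δ else 0) with hA
  have key : ∀ (y : Fin d → ℤ) (i : Fin d),
      A.mulVec y i = y i + if h : 0 < (i:ℕ) then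
        Δ * y ⟨(i:ℕ)-1, Nat.lt_of_le_of_lt (Nat.sub_le _ _) i.isLt⟩ else 0 := by
    intro y i
    simp only [Matrix.mulVec, dotProduct, hA]
    rw [Finset.sum_congr rfl (fun j _ => add_mul _ _ _), Finset.sum_add_distrib]
    congr 1
    · simp [ite_mul, Fin.val_eq_val, Finset.sum_ite_eq]
    · by_cases h0 : 0 < (i:ℕ)
      · rw [dif_pos h0]
        have hcond : ∀ j : Fin d, ((i:ℕ) = (j:ℕ)+1) ↔
            j = ⟨(i:ℕ)-1, Nat.lt_of_le_of_lt (Nat.sub_le _ _) i.isLt⟩ := by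
          intro j
          rw [Fin.ext_iff]
          simp only []
          omega
        simp only [hcond, ite_mul, zero_mul, Finset.sum_ite_eq', Finset.mem_univ, if_true]
      · rw [dif_neg h0]
        have : ∀ j : Fin d, ¬ ((i:ℕ) = (j:ℕ)+1) := by intro j; omega
        simp [this]
  have inj : ∀ y z : Fin d → ℤ, A.mulVec y = A.mulVec z → y = z := by
    intro y z h
    have H : ∀ n (hnd : n < d), y ⟨n, hnd⟩ = z ⟨n, hnd⟩ := by
      intro n
      induction n using Nat.strong_induction_on with
      | _ n ih =>
        intro hnd
        have h1 := congrFun h ⟨n, hnd⟩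
        rw [key, key] at h1
        by_cases h0 : 0 < n
        · rw [dif_pos h0, dif_pos h0] at h1
          have h2 := ih (n-1) (by omega) (Nat.lt_of_le_of_lt (Nat.sub_le _ _) hnd)
          simp only [h2] at h1
          linarith
        · rw [dif_neg h0, dif_neg h0] at h1
          simpa using h1
    funext i
    have := H i.val i.isLt
    simpa using this
  set x : Fin d → ℤ := fun i => if Even (i:ℕ) then Δ^(i:ℕ) else 0 with hx
  set x' : Fin d → ℤ := fun i => if Even (i:ℕ) then 0 else Δ^(i:ℕ) with hx'
  set b : Fin d → ℤ := fun i => Δ^(i:ℕ) with hb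
  set b' : Fin d → ℤ := fun i => if (i:ℕ) = 0 then 0 else Δ^(i:ℕ) with hb'
  have hpow : ∀ n : ℕ, 0 < n → Δ * Δ^(n-1) = Δ^n := by
    intro n hn
    rw [← pow_succ']
    congr 1
    omega
  have hAx : A.mulVec x = b := by
    funext i
    rw [key]
    by_cases h0 : 0 < (i:ℕ)
    · rw [dif_pos h0]
      rcases Nat.even_or_odd (i:ℕ) with he | ho
      · have h1 : ¬ Even ((i:ℕ)-1) := by
          rcases he with ⟨k, hk⟩; rintro ⟨m, hm⟩; omega
        simp [hx, hb, he, h1]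
      · have h1 : Even ((i:ℕ)-1) := by
          rcases ho with ⟨k, hk⟩; exact ⟨k, by omega⟩
        have h2 : ¬ Even (i:ℕ) := Nat.not_even_iff_odd.mpr ho
        simp only [hx, hb, if_neg h2, if_pos h1, zero_add]
        exact hpow _ h0
    · rw [dif_neg h0]
      have : (i:ℕ) = 0 := by omega
      simp [hx, hb, this]
  have hAx' : A.mulVec x' = b' := by
    funext i
    rw [key]
    by_cases h0 : 0 < (i:ℕ)
    · rw [dif_pos h0]
      rcases Nat.even_or_odd (i:ℕ) with he | ho
      · have h1 : ¬ Even ((i:ℕ)-1) := by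
          rcases he with ⟨k, hk⟩; rintro ⟨m, hm⟩; omega
        simp only [hx', hb', if_pos he, if_neg h1, zero_add, if_neg (by omega : ¬ (i:ℕ) = 0)]
        exact hpow _ h0
      · have h1 : Even ((i:ℕ)-1) := by
          rcases ho with ⟨k, hk⟩; exact ⟨k, by omega⟩
        have h2 : ¬ Even (i:ℕ) := Nat.not_even_iff_odd.mpr ho
        simp only [hx', hb', if_neg h2, if_pos h1, mul_zero, add_zero,
          if_neg (by omega : ¬ (i:ℕ) = 0)]
    · rw [dif_neg h0]
      have : (i:ℕ) = 0 := by omega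
      simp [hx', hb', this]
  have hxnn : ∀ i, 0 ≤ x i := by
    intro i; simp only [hx]; split
    · exact pow_nonneg hΔ0 _
    · exact le_refl 0
  have hx'nn : ∀ i, 0 ≤ x' i := by
    intro i; simp only [hx']; split
    · exact le_refl 0
    · exact pow_nonneg hΔ0 _
  refine ⟨A, b, b', ?_, ?_, ?_, ?_, ?_, ?_, x, x', ?_, ?_, ?_⟩
  · intro i j
    simp only [hA]
    split_ifs <;> omega
  · intro i j
    simp only [hA]
    split_ifs <;> omega
  · refine ⟨⟨1, by omega⟩, ⟨0, by omega⟩, ?_⟩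
    simp [hA]
  · intro i; exact pow_nonneg hΔ0 _
  · intro i; simp only [hb']; split
    · exact le_refl 0
    · exact pow_nonneg hΔ0 _
  · have hcongr : ∀ i ∈ Finset.univ, |b i - b' i| = if i = (⟨0, hd0⟩ : Fin d) then 1 else 0 := by
      intro i _
      by_cases h : (i:ℕ) = 0
      · rw [if_pos (by rw [Fin.ext_iff]; exact h)]
        simp [hb, hb', h]
      · rw [if_neg (by rw [Fin.ext_iff]; exact h)]
        simp [hb, hb', h]
    rw [Finset.sum_congr rfl hcongr, Finset.sum_ite_eq', if_pos (Finset.mem_univ _)]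
  · ext y
    simp only [Set.mem_setOf_eq, Set.mem_singleton_iff]
    constructor
    · rintro ⟨hy, hAy⟩
      exact inj y x (hAy.trans hAx.symm)
    · rintro rfl
      exact ⟨hxnn, hAx⟩
  · ext y
    simp only [Set.mem_setOf_eq, Set.mem_singleton_iff]
    constructor
    · rintro ⟨hy, hAy⟩
      exact inj y x' (hAy.trans hAx'.symm)
    · rintro rfl
      exact ⟨hx'nn, hAx'⟩
  · have habs : ∀ i : Fin d, |x i - x' i| = Δ^(i:ℕ) := by
      intro i
      by_cases h : Even (i:ℕ)
      · simp [hx, hx', h, abs_of_nonneg (pow_nonneg hΔ0 _)]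
      · simp [hx, hx', h, abs_of_nonneg (pow_nonneg hΔ0 _)]
    calc Δ ^ (d-1) = |x ⟨d-1, by omega⟩ - x' ⟨d-1, by omega⟩| := by rw [habs]
      _ ≤ ∑ i, |x i - x' i| :=
          Finset.single_le_sum (f := fun i => |x i - x' i|)
            (fun i _ => abs_nonneg _) (Finset.mem_univ (⟨d-1, by omega⟩ : Fin d))
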